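/- Let G be a group with the unique root property, let H be a normal subgroup of finite index in G, and let β be an automorphism of H. Let A and B be subgroups of finite index in G and let α : A → G be an injective homomorphism with image B such that α(x) = β(x) for all x ∈ H ∩ A. If the index of A in G is coprime to the index of H in G, and the index of B in G is coprime to the index of H in G, then β extends to an automorphism ψ of G, i.e., there is an automorphism ψ of G with ψ(h) = β(h) for all h ∈ H. -/

import Mathlib

/-- If `G` has the unique root property, `H` is a normal subgroup of finite index, `β` an
automorphism of `H`, and `β` agrees with an isomorphism `α : A → B` between finite-index
subgroups whose indices are coprime to the index of `H`, then `β` extends to an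
automorphism of `G`. -/
theorem stmt_5 (G : Type*) [Group G]
    (hurp : ∀ (x y : G) (n : ℕ), 0 < n → x ^ n = y ^ n → x = y)
    (H : Subgroup G) (hnorm : H.Normal) (hH : H.FiniteIndex)
    (β : H ≃* H)
    (A B : Subgroup G) (hA : A.FiniteIndex) (hB : B.FiniteIndex)
    (α : A →* G) (hinj : Function.Injective α) (hrange : α.range = B)
    (hagree : ∀ (x : G) (hxH : x ∈ H) (hxA : x ∈ A),
      α ⟨x, hxA⟩ = (β ⟨x, hxH⟩ : G))
    (hcopA : Nat.Coprime A.index H.index)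
    (hcopB : Nat.Coprime B.index H.index) :
    ∃ ψ : G ≃* G, ∀ (h : G) (hh : h ∈ H), ψ h = (β ⟨h, hh⟩ : G) := by
  classical
  haveI := hnorm
  haveI := hH
  haveI := hA
  haveI := hB
  -- every g in G decomposes as k * h with k in K, h in H (for suitable K)
  have hsup : ∀ (K : Subgroup G), Nat.Coprime K.index H.index →
      ∀ g : G, ∃ a ∈ K, ∃ h ∈ H, g = a * h := by
    intro K hKcop g
    have h1 : (K ⊔ H).index ∣ K.index := Subgroup.index_dvd_of_le le_sup_left
    have h2 : (K ⊔ H).index ∣ H.index := Subgroup.index_dvd_of_le le_sup_right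
    have hone : (K ⊔ H).index = 1 :=
      Nat.eq_one_of_dvd_coprimes hKcop h1 h2
    have htop : K ⊔ H = ⊤ := Subgroup.index_eq_one.mp hone
    have hg : g ∈ (↑(K ⊔ H) : Set G) := by rw [htop]; trivial
    rw [Subgroup.mul_normal K H] at hg
    obtain ⟨a, ha, h, hh, hgh⟩ := hg
    exact ⟨a, ha, h, hh, hgh.symm⟩
  -- existence of positive powers landing in A
  have hpow : ∀ g : G, ∃ m : ℕ, 0 < m ∧ g ^ m ∈ A := by
    intro g
    obtain ⟨m, hm, _, hmem⟩ := Subgroup.exists_pow_mem_of_index_ne_zero hA.index_ne_zero g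
    exact ⟨m, hm, hmem⟩
  -- key conjugation lemma
  have hconj : ∀ (a : G) (ha : a ∈ A) (h : G) (hh : h ∈ H),
      (β ⟨a * h * a⁻¹, hnorm.conj_mem h hh a⟩ : G)
        = α ⟨a, ha⟩ * (β ⟨h, hh⟩ : G) * (α ⟨a, ha⟩)⁻¹ := by
    intro a ha h hh
    obtain ⟨m, hm, hmA⟩ := hpow h
    have hmH : h ^ m ∈ H := pow_mem hh m
    apply hurp _ _ m hm
    have e1 : ((β ⟨a * h * a⁻¹, hnorm.conj_mem h hh a⟩ : H) : G) ^ m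
        = (β ⟨a * h ^ m * a⁻¹, hnorm.conj_mem _ hmH a⟩ : G) := by
      rw [← Subgroup.coe_pow, ← map_pow]
      congr 2
      ext
      simp [conj_pow]
    rw [e1]
    have hconjA : a * h ^ m * a⁻¹ ∈ A := mul_mem (mul_mem ha hmA) (inv_mem ha)
    rw [← hagree _ _ hconjA]
    have e2 : (⟨a * h ^ m * a⁻¹, hconjA⟩ : A)
        = ⟨a, ha⟩ * ⟨h ^ m, hmA⟩ * ⟨a, ha⟩⁻¹ := by ext; simp
    rw [e2, map_mul, map_mul, map_inv, hagree _ hmH hmA]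
    have e3 : (β ⟨h ^ m, hmH⟩ : G) = ((β ⟨h, hh⟩ : H) : G) ^ m := by
      rw [← Subgroup.coe_pow, ← map_pow]
      congr 2
    rw [e3, conj_pow]
  -- well-definedness
  have hwd : ∀ (a₁ : G) (ha₁ : a₁ ∈ A) (h₁ : G) (hh₁ : h₁ ∈ H)
      (a₂ : G) (ha₂ : a₂ ∈ A) (h₂ : G) (hh₂ : h₂ ∈ H), a₁ * h₁ = a₂ * h₂ →
      α ⟨a₁, ha₁⟩ * (β ⟨h₁, hh₁⟩ : G) = α ⟨a₂, ha₂⟩ * (β ⟨h₂, hh₂⟩ : G) := by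
    intro a₁ ha₁ h₁ hh₁ a₂ ha₂ h₂ hh₂ heq
    have hz : a₂⁻¹ * a₁ = h₂ * h₁⁻¹ := by
      rw [inv_mul_eq_iff_eq_mul, ← mul_assoc, eq_mul_inv_iff_mul_eq]
      exact heq
    have hzA : a₂⁻¹ * a₁ ∈ A := mul_mem (inv_mem ha₂) ha₁
    have hzH : a₂⁻¹ * a₁ ∈ H := hz ▸ mul_mem hh₂ (inv_mem hh₁)
    have h1 : α ⟨a₂⁻¹ * a₁, hzA⟩ = (β ⟨a₂⁻¹ * a₁, hzH⟩ : G) := hagree _ hzH hzA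
    have e1 : (⟨a₂⁻¹ * a₁, hzA⟩ : A) = ⟨a₂, ha₂⟩⁻¹ * ⟨a₁, ha₁⟩ := by ext; simp
    have e2 : (⟨a₂⁻¹ * a₁, hzH⟩ : H) = ⟨h₂, hh₂⟩ * ⟨h₁, hh₁⟩⁻¹ := by
      ext; simpa using hz
    simp only [e1, e2, map_mul, map_inv] at h1
    push_cast at h1
    have h2 : α ⟨a₁, ha₁⟩
        = α ⟨a₂, ha₂⟩ * ((β ⟨h₂, hh₂⟩ : G) * ((β ⟨h₁, hh₁⟩ : H) : G)⁻¹) := by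
      rw [← h1]; group
    rw [h2]; group
  -- choose decompositions
  choose dA hdA dH hdH hd using hsup A hcopA
  -- the underlying function
  set f : G → G := fun g => α ⟨dA g, hdA g⟩ * (β ⟨dH g, hdH g⟩ : G) with hf
  have hfspec : ∀ (g : G) (a : G) (ha : a ∈ A) (h : G) (hh : h ∈ H), g = a * h →
      f g = α ⟨a, ha⟩ * (β ⟨h, hh⟩ : G) := by
    intro g a ha h hh hgh
    exact hwd _ _ _ _ _ ha _ hh (by rw [← hd g, ← hgh])
  -- f restricted to H is β
  have hfH : ∀ (h : G) (hh : h ∈ H), f h = (β ⟨h, hh⟩ : G) := by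
    intro h hh
    have h' := hfspec h 1 (one_mem A) h hh (by group)
    rw [show (⟨1, one_mem A⟩ : A) = 1 from rfl, map_one, one_mul] at h'
    exact h'
  -- f restricted to A is α
  have hfA : ∀ (a : G) (ha : a ∈ A), f a = α ⟨a, ha⟩ := by
    intro a ha
    have h' := hfspec a a ha 1 (one_mem H) (by group)
    rw [show (⟨1, one_mem H⟩ : H) = 1 from rfl, map_one] at h'
    simpa using h'
  -- f is multiplicative
  have hmul : ∀ g₁ g₂ : G, f (g₁ * g₂) = f g₁ * f g₂ := by
    intro g₁ g₂
    set a₁ := dA g₁; set h₁ := dH g₁; set a₂ := dA g₂; set h₂ := dH g₂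
    have ha₁ := hdA g₁; have hh₁ := hdH g₁; have ha₂ := hdA g₂; have hh₂ := hdH g₂
    have hc : a₂⁻¹ * h₁ * a₂ ∈ H := by
      have := hnorm.conj_mem h₁ hh₁ a₂⁻¹
      simpa using this
    have hmemH : (a₂⁻¹ * h₁ * a₂) * h₂ ∈ H := mul_mem hc hh₂
    have hdecomp : g₁ * g₂ = (a₁ * a₂) * ((a₂⁻¹ * h₁ * a₂) * h₂) := by
      rw [hd g₁, hd g₂]; group; rfl
    rw [hfspec (g₁ * g₂) (a₁ * a₂) (mul_mem ha₁ ha₂) _ hmemH hdecomp]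
    have eH : (⟨(a₂⁻¹ * h₁ * a₂) * h₂, hmemH⟩ : H) = ⟨a₂⁻¹ * h₁ * a₂, hc⟩ * ⟨h₂, hh₂⟩ := by
      ext; simp
    have eA : (⟨a₁ * a₂, mul_mem ha₁ ha₂⟩ : A) = ⟨a₁, ha₁⟩ * ⟨a₂, ha₂⟩ := by ext; simp
    rw [eH, eA, map_mul, map_mul]
    push_cast
    have hc' : (β ⟨a₂⁻¹ * h₁ * a₂, hc⟩ : G)
        = (α ⟨a₂, ha₂⟩)⁻¹ * (β ⟨h₁, hh₁⟩ : G) * α ⟨a₂, ha₂⟩ := by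
      have := hconj a₂⁻¹ (inv_mem ha₂) h₁ hh₁
      have emem : (⟨a₂⁻¹, inv_mem ha₂⟩ : A) = ⟨a₂, ha₂⟩⁻¹ := by ext; simp
      rw [emem, map_inv] at this
      have ee : (β ⟨a₂⁻¹ * h₁ * a₂⁻¹⁻¹, hnorm.conj_mem h₁ hh₁ a₂⁻¹⟩ : G)
          = (β ⟨a₂⁻¹ * h₁ * a₂, hc⟩ : G) := by congr 2; ext; simp
      rw [ee] at this
      simpa using this
    rw [hc']
    simp only [hf]
    group; rfl
  -- package as a monoid hom
  set F : G →* G := MonoidHom.mk' f hmul with hF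
  have hn : 0 < H.index := Nat.pos_of_ne_zero hH.index_ne_zero
  have hFpow : ∀ g : G, F g ^ H.index = (β ⟨g ^ H.index, H.pow_index_mem g⟩ : G) := by
    intro g
    rw [← map_pow]
    exact hfH _ (H.pow_index_mem g)
  -- injective
  have hFinj : Function.Injective F := by
    intro x y hxy
    apply hurp x y H.index hn
    have h1 : F x ^ H.index = F y ^ H.index := by rw [hxy]
    rw [hFpow, hFpow] at h1
    have h2 : (β ⟨x ^ H.index, H.pow_index_mem x⟩ : H)
        = β ⟨y ^ H.index, H.pow_index_mem y⟩ := Subtype.ext h1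
    have h3 := β.injective h2
    exact congrArg Subtype.val h3
  -- surjective
  have hFsurj : Function.Surjective F := by
    intro y
    obtain ⟨b, hb, h, hh, hy⟩ := hsup B hcopB y
    have hbr : b ∈ α.range := by rw [hrange]; exact hb
    obtain ⟨a, hab⟩ := hbr
    obtain ⟨h₀, hh₀⟩ := β.surjective ⟨h, hh⟩
    refine ⟨(a : G) * (h₀ : G), ?_⟩
    have : F ((a : G) * (h₀ : G)) = F (a : G) * F (h₀ : G) := map_mul F _ _
    rw [this]
    have e1 : F (a : G) = α a := by
      have := hfA (a : G) a.2
      simpa [hF] using this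
    have e2 : F (h₀ : G) = (β h₀ : G) := by
      have := hfH (h₀ : G) h₀.2
      simpa [hF] using this
    rw [e1, e2, hab, hh₀, hy]
  refine ⟨MulEquiv.ofBijective F ⟨hFinj, hFsurj⟩, ?_⟩
  intro h hh
  show F h = _
  exact hfH h hh
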